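/- If t̄ ∈ relbd(C), then for every λ > 0 the norm-penalized KLIEP loss ℓ_λ(Δ) = ℓ(Δ) + λ·N(Δ) attains a global minimum, i.e., there exists Δ₀ ∈ ℝ^k with ℓ_λ(Δ₀) ≤ ℓ_λ(Δ) for all Δ ∈ ℝ^k. (Theorem 2(ii), λ > 0 case.) -/

import Mathlib

open scoped RealInnerProductSpace

/-- The empirical KLIEP loss
`ℓ(Δ) = -⟪Δ, t̄⟫ + log((1/n) ∑_j exp ⟪Δ, t_j⟫)`. -/
noncomputable def kliepLoss {k n : ℕ} (tbar : EuclideanSpace ℝ (Fin k))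
    (t : Fin n → EuclideanSpace ℝ (Fin k)) (Δ : EuclideanSpace ℝ (Fin k)) : ℝ :=
  -⟪Δ, tbar⟫ + Real.log ((1 / (n : ℝ)) * ∑ j, Real.exp ⟪Δ, t j⟫)

section Aux

variable {k : ℕ} (N : EuclideanSpace ℝ (Fin k) → ℝ)

/-- Finset subadditivity for a subadditive function vanishing at zero. -/
lemma aux_N_sum_le (hN_add : ∀ x y, N (x + y) ≤ N x + N y) (hN0 : N 0 = 0)
    {ι : Type*} (s : Finset ι) (f : ι → EuclideanSpace ℝ (Fin k)) :
    N (∑ i ∈ s, f i) ≤ ∑ i ∈ s, N (f i) := by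
  classical
  induction s using Finset.cons_induction with
  | empty => simp [hN0]
  | cons a s' ha ih =>
    rw [Finset.sum_cons, Finset.sum_cons]
    exact le_trans (hN_add _ _) (by linarith)

/-- The KLIEP loss is bounded below by `-log n` when `t̄ ∈ conv{t_j}`. -/
lemma aux_kliep_lb {k n : ℕ} (hn : 1 ≤ n) (tbar : EuclideanSpace ℝ (Fin k))
    (t : Fin n → EuclideanSpace ℝ (Fin k))
    (hmem : tbar ∈ convexHull ℝ (Set.range t)) (Δ : EuclideanSpace ℝ (Fin k)) :
    -Real.log n ≤ kliepLoss tbar t Δ := by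
  have hne : (Finset.univ : Finset (Fin n)).Nonempty := by
    simpa [Finset.univ_nonempty_iff] using Fin.pos_iff_nonempty.mp hn
  obtain ⟨j₀, -, hj₀⟩ := Finset.exists_max_image Finset.univ (fun j => ⟪Δ, t j⟫) hne
  -- tbar lies in the halfspace ⟪Δ, ·⟫ ≤ ⟪Δ, t j₀⟫
  have hlin : IsLinearMap ℝ (fun x : EuclideanSpace ℝ (Fin k) => ⟪Δ, x⟫) :=
    ⟨fun x y => inner_add_right Δ x y, fun c x => real_inner_smul_right Δ x c⟩
  have hsub : convexHull ℝ (Set.range t) ⊆ {x | ⟪Δ, x⟫ ≤ ⟪Δ, t j₀⟫} := by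
    apply convexHull_min
    · rintro x ⟨j, rfl⟩
      exact hj₀ j (Finset.mem_univ j)
    · exact convex_halfSpace_le hlin _
  have htb : ⟪Δ, tbar⟫ ≤ ⟪Δ, t j₀⟫ := hsub hmem
  have hsum : Real.exp ⟪Δ, tbar⟫ ≤ ∑ j, Real.exp ⟪Δ, t j⟫ := by
    have h1 : Real.exp ⟪Δ, tbar⟫ ≤ Real.exp ⟪Δ, t j₀⟫ := Real.exp_le_exp.mpr htb
    have h2 := Finset.single_le_sum (f := fun j : Fin n => Real.exp ⟪Δ, t j⟫)
      (fun j _ => (Real.exp_pos _).le) (Finset.mem_univ j₀)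
    exact le_trans h1 h2
  have hnpos : (0:ℝ) < n := by exact_mod_cast hn
  have hfrac : (0:ℝ) < 1 / n := by positivity
  have hlog : Real.log ((1 / (n:ℝ)) * Real.exp ⟪Δ, tbar⟫)
      ≤ Real.log ((1 / (n:ℝ)) * ∑ j, Real.exp ⟪Δ, t j⟫) := by
    apply Real.log_le_log (by positivity)
    exact mul_le_mul_of_nonneg_left hsum hfrac.le
  have heq : Real.log ((1 / (n:ℝ)) * Real.exp ⟪Δ, tbar⟫)
      = -Real.log n + ⟪Δ, tbar⟫ := by
    rw [Real.log_mul (by positivity) (Real.exp_pos _).ne', Real.log_exp,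
      one_div, Real.log_inv]
  unfold kliepLoss
  rw [heq] at hlog
  linarith

end Aux

/-- Theorem 2(ii), `λ > 0` case: if `t̄ ∈ relbd(C)` (i.e. `t̄ ∈ C \ relint(C)`), then for every
`λ > 0` the norm-penalized KLIEP loss `ℓ(Δ) + λ·N(Δ)` attains a global minimum. -/
theorem penalized_kliep_attains_min_of_relbd {k n : ℕ} (hk : 1 ≤ k) (hn : 1 ≤ n)
    (tbar : EuclideanSpace ℝ (Fin k)) (t : Fin n → EuclideanSpace ℝ (Fin k))
    (N : EuclideanSpace ℝ (Fin k) → ℝ)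
    (hN_add : ∀ x y, N (x + y) ≤ N x + N y)
    (hN_smul : ∀ (c : ℝ) (x), N (c • x) = |c| * N x)
    (hN_zero : ∀ x, N x = 0 ↔ x = 0)
    (hmem : tbar ∈ convexHull ℝ (Set.range t) \ intrinsicInterior ℝ (convexHull ℝ (Set.range t))) :
    ∀ lam : ℝ, 0 < lam →
      ∃ Δ₀ : EuclideanSpace ℝ (Fin k), ∀ Δ : EuclideanSpace ℝ (Fin k),
        kliepLoss tbar t Δ₀ + lam * N Δ₀ ≤ kliepLoss tbar t Δ + lam * N Δ := by
  intro lam hlam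
  classical
  have hN0 : N 0 = 0 := (hN_zero 0).mpr rfl
  have hNneg : ∀ x, N (-x) = N x := fun x => by
    have := hN_smul (-1) x; simpa using this
  have hNnonneg : ∀ x, 0 ≤ N x := by
    intro x
    have h := hN_add x (-x)
    rw [add_neg_cancel, hN0, hNneg] at h
    linarith
  -- Upper bound: `N x ≤ C ‖x‖`.
  set b := EuclideanSpace.basisFun (Fin k) ℝ with hb
  set C : ℝ := ∑ i, N (b i) with hC
  have hCnonneg : 0 ≤ C := Finset.sum_nonneg fun i _ => hNnonneg _
  have hNle : ∀ x, N x ≤ C * ‖x‖ := by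
    intro x
    have hrepr : ∑ i, b.repr x i • b i = x := b.sum_repr x
    calc N x = N (∑ i, b.repr x i • b i) := by rw [hrepr]
      _ ≤ ∑ i, N (b.repr x i • b i) := aux_N_sum_le N hN_add hN0 _ _
      _ ≤ ∑ i, ‖x‖ * N (b i) := by
          apply Finset.sum_le_sum
          intro i _
          rw [hN_smul]
          apply mul_le_mul_of_nonneg_right _ (hNnonneg _)
          have : b.repr x i = ⟪b i, x⟫ := b.repr_apply_apply x i
          rw [this]
          calc |⟪b i, x⟫| ≤ ‖b i‖ * ‖x‖ := abs_real_inner_le_norm _ _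
            _ = ‖x‖ := by rw [b.orthonormal.1 i, one_mul]
      _ = C * ‖x‖ := by rw [← Finset.mul_sum, ← hC, mul_comm]
  -- N is Lipschitz, hence continuous.
  have hNcont : Continuous N := by
    rw [Metric.continuous_iff]
    intro x ε hε
    rcases le_or_gt C 0 with hC0 | hC0
    · refine ⟨1, one_pos, fun y _ => ?_⟩
      have h1 : N y ≤ 0 := le_trans (hNle y) (mul_nonpos_of_nonpos_of_nonneg hC0 (norm_nonneg _))
      have h2 : N x ≤ 0 := le_trans (hNle x) (mul_nonpos_of_nonpos_of_nonneg hC0 (norm_nonneg _))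
      have h1' : N y = 0 := le_antisymm h1 (hNnonneg y)
      have h2' : N x = 0 := le_antisymm h2 (hNnonneg x)
      simpa [Real.dist_eq, h1', h2'] using hε
    · refine ⟨ε / C, by positivity, fun y hy => ?_⟩
      have key : ∀ u v : EuclideanSpace ℝ (Fin k), N u - N v ≤ C * ‖u - v‖ := by
        intro u v
        have := hN_add (u - v) v
        rw [sub_add_cancel] at this
        linarith [hNle (u - v)]
      have h1 := key y x
      have h2 := key x y
      rw [norm_sub_rev] at h2
      rw [Real.dist_eq, abs_sub_lt_iff]
      have hd : ‖y - x‖ < ε / C := by rwa [dist_eq_norm] at hy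
      have hlt : C * ‖y - x‖ < ε := by
        have := (lt_div_iff₀ hC0).mp hd
        linarith
      constructor <;> linarith
  -- Lower bound: `c ‖x‖ ≤ N x` with `c > 0`.
  haveI : Nontrivial (EuclideanSpace ℝ (Fin k)) := by
    refine ⟨EuclideanSpace.single ⟨0, hk⟩ 1, 0, fun h => ?_⟩
    have := congrArg (fun v => ‖v‖) h
    simp [EuclideanSpace.norm_single] at this
  have hsph : (Metric.sphere (0 : EuclideanSpace ℝ (Fin k)) 1).Nonempty :=
    NormedSpace.sphere_nonempty.mpr zero_le_one
  obtain ⟨x₀, hx₀mem, hx₀min⟩ :=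
    (isCompact_sphere (0 : EuclideanSpace ℝ (Fin k)) 1).exists_isMinOn hsph hNcont.continuousOn
  set c : ℝ := N x₀ with hc
  have hx₀norm : ‖x₀‖ = 1 := by simpa using hx₀mem
  have hcpos : 0 < c := by
    rcases lt_or_eq_of_le (hNnonneg x₀) with h | h
    · exact h
    · exfalso
      have : x₀ = 0 := (hN_zero x₀).mp h.symm
      rw [this] at hx₀norm; simp at hx₀norm
  have hNge : ∀ x, c * ‖x‖ ≤ N x := by
    intro x
    rcases eq_or_ne x 0 with rfl | hx
    · simp [hN0]
    · have hxn : (0:ℝ) < ‖x‖ := norm_pos_iff.mpr hx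
      have hmem' : ‖x‖⁻¹ • x ∈ Metric.sphere (0 : EuclideanSpace ℝ (Fin k)) 1 := by
        simp [norm_smul, abs_of_pos (inv_pos.mpr hxn), inv_mul_cancel₀ hxn.ne']
      have h2 : N (‖x‖⁻¹ • x) = ‖x‖⁻¹ * N x := by
        rw [hN_smul, abs_of_pos (inv_pos.mpr hxn)]
      have this : c ≤ ‖x‖⁻¹ * N x := by
        have h3 := hx₀min hmem'
        simpa [h2] using h3
      calc c * ‖x‖ ≤ (‖x‖⁻¹ * N x) * ‖x‖ := by
            apply mul_le_mul_of_nonneg_right this hxn.le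
        _ = N x := by field_simp
  -- The objective function.
  set g : EuclideanSpace ℝ (Fin k) → ℝ := fun Δ => kliepLoss tbar t Δ + lam * N Δ with hg
  have hnpos : (0:ℝ) < n := by exact_mod_cast hn
  -- continuity of g
  have hgcont : Continuous g := by
    apply Continuous.add _ (continuous_const.mul hNcont)
    unfold kliepLoss
    apply Continuous.add
    · exact (continuous_id.inner continuous_const).neg
    · apply Continuous.log
      · exact continuous_const.mul
          (continuous_finset_sum _ fun j _ =>
            Real.continuous_exp.comp (continuous_id.inner continuous_const))
      · intro Δ
        have : (0:ℝ) < (1 / (n:ℝ)) * ∑ j, Real.exp ⟪Δ, t j⟫ := by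
          apply mul_pos (by positivity)
          apply Finset.sum_pos (fun j _ => Real.exp_pos _)
          simpa [Finset.univ_nonempty_iff] using Fin.pos_iff_nonempty.mp hn
        exact this.ne'
  have hg0 : g 0 = 0 := by
    simp only [hg, hN0, mul_zero, add_zero]
    unfold kliepLoss
    simp only [inner_zero_left, neg_zero, Real.exp_zero, Finset.sum_const,
      Finset.card_univ, Fintype.card_fin, nsmul_eq_mul, mul_one]
    rw [one_div, inv_mul_cancel₀ hnpos.ne', Real.log_one, zero_add]
  -- coercive lower bound
  have hglb : ∀ Δ, -Real.log n + lam * (c * ‖Δ‖) ≤ g Δ := by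
    intro Δ
    have h1 := aux_kliep_lb hn tbar t hmem.1 Δ
    have h2 := hNge Δ
    have := mul_le_mul_of_nonneg_left h2 hlam.le
    simp only [hg]
    linarith
  -- minimize on a compact ball
  set R : ℝ := (Real.log n + 1) / (lam * c) with hR
  have hlogn : 0 ≤ Real.log n := Real.log_nonneg (by exact_mod_cast hn)
  have hRpos : 0 < R := by positivity
  have hball : IsCompact (Metric.closedBall (0 : EuclideanSpace ℝ (Fin k)) R) :=
    isCompact_closedBall _ _
  have hballne : (Metric.closedBall (0 : EuclideanSpace ℝ (Fin k)) R).Nonempty :=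
    ⟨0, Metric.mem_closedBall_self hRpos.le⟩
  obtain ⟨Δ₀, hΔ₀mem, hΔ₀min⟩ := hball.exists_isMinOn hballne hgcont.continuousOn
  refine ⟨Δ₀, fun Δ => ?_⟩
  have hΔ₀le0 : g Δ₀ ≤ 0 := by
    have h := hΔ₀min (Metric.mem_closedBall_self hRpos.le)
    simpa [hg0] using h
  rcases le_or_gt ‖Δ‖ R with hle | hgt
  · have h := hΔ₀min (show Δ ∈ Metric.closedBall (0 : EuclideanSpace ℝ (Fin k)) R by
      simpa [Metric.mem_closedBall, dist_eq_norm] using hle)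
    simpa using h
  · have h1 : -Real.log n + lam * (c * R) ≤ -Real.log n + lam * (c * ‖Δ‖) := by
      have : c * R ≤ c * ‖Δ‖ := mul_le_mul_of_nonneg_left hgt.le hcpos.le
      nlinarith
    have h2 : lam * (c * R) = Real.log n + 1 := by
      rw [hR]; field_simp
    have := hglb Δ
    show g Δ₀ ≤ g Δ
    rw [h2] at h1
    linarith
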